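/- Let A be a finite commutative group. A 2-cocycle f : A × A → ℂˣ (with trivial action) is a 2-coboundary if and only if f(x,y) = f(y,x) for all x, y ∈ A. -/

import Mathlib

open CategoryTheory
universe u

noncomputable instance : RootableBy ℂˣ ℕ :=
  rootableByOfPowLeftSurj _ _ (fun {n} hn y => by
    obtain ⟨w, hw⟩ := IsAlgClosed.exists_pow_nat_eq (k := ℂ) (y : ℂ) (Nat.pos_of_ne_zero hn)
    have hwne : w ≠ 0 := by
      intro h
      exact y.ne_zero (by rw [← hw, h, zero_pow hn])
    exact ⟨Units.mk0 w hwne, Units.ext (by simpa using hw)⟩)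

noncomputable instance : RootableBy (ULift.{u} ℂˣ) ℕ := ULift.instRootableBy ℂˣ ℕ

noncomputable instance : RootableBy (ULift.{u} ℂˣ) ℤ :=
  Group.rootableByIntOfRootableByNat _

noncomputable instance divAdditive (X : Type*) [Group X] [RootableBy X ℤ] :
    DivisibleBy (Additive X) ℤ where
  div a n := Additive.ofMul (RootableBy.root a.toMul n)
  div_zero a := congrArg Additive.ofMul (RootableBy.root_zero _)
  div_cancel {n} a hn := by
    change Additive.ofMul ((RootableBy.root a.toMul n) ^ n) = a
    rw [RootableBy.root_cancel _ hn]; rfl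

noncomputable instance : Injective (AddCommGrpCat.of (Additive (ULift.{u} ℂˣ))) :=
  AddCommGrpCat.injective_of_divisible _

/-- A normalized symmetric 2-cocycle. -/
structure NormSymmCocycle (A : Type u) [CommGroup A] where
  f : A → A → ℂˣ
  cocycle : ∀ x y z, f x y * f (x * y) z = f x (y * z) * f y z
  symm : ∀ x y, f x y = f y x
  oneL : ∀ y, f 1 y = 1
  oneR : ∀ x, f x 1 = 1

namespace NormSymmCocycle

variable {A : Type u} [CommGroup A] (c : NormSymmCocycle A)

/-- The central extension of `A` by `ℂˣ` determined by the cocycle. -/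
@[ext] structure E (c : NormSymmCocycle A) where
  a : ULift.{u} ℂˣ
  x : A

instance : CommGroup c.E where
  mul p q := ⟨⟨p.a.down * q.a.down * c.f p.x q.x⟩, p.x * q.x⟩
  one := ⟨⟨1⟩, 1⟩
  inv p := ⟨⟨p.a.down⁻¹ * (c.f p.x p.x⁻¹)⁻¹⟩, p.x⁻¹⟩
  mul_assoc p q r := by
    refine E.ext (ULift.ext _ _ ?_) (mul_assoc _ _ _)
    show p.a.down * q.a.down * c.f p.x q.x * r.a.down * c.f (p.x * q.x) r.x
      = p.a.down * (q.a.down * r.a.down * c.f q.x r.x) * c.f p.x (q.x * r.x)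
    have h := c.cocycle p.x q.x r.x
    rw [Units.ext_iff] at h ⊢
    push_cast at h ⊢
    linear_combination (↑p.a.down * ↑q.a.down * ↑r.a.down : ℂ) * h
  one_mul p := by
    refine E.ext (ULift.ext _ _ ?_) (one_mul _)
    show (1 : ℂˣ) * p.a.down * c.f 1 p.x = p.a.down
    rw [c.oneL]; group
  mul_one p := by
    refine E.ext (ULift.ext _ _ ?_) (mul_one _)
    show p.a.down * (1 : ℂˣ) * c.f p.x 1 = p.a.down
    rw [c.oneR]; group
  inv_mul_cancel p := by
    refine E.ext (ULift.ext _ _ ?_) (inv_mul_cancel _)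
    show p.a.down⁻¹ * (c.f p.x p.x⁻¹)⁻¹ * p.a.down * c.f p.x⁻¹ p.x = 1
    rw [c.symm p.x⁻¹ p.x, mul_comm p.a.down⁻¹]
    group
  mul_comm p q := by
    refine E.ext (ULift.ext _ _ ?_) (mul_comm _ _)
    show p.a.down * q.a.down * c.f p.x q.x = q.a.down * p.a.down * c.f q.x p.x
    rw [c.symm p.x q.x, mul_comm p.a.down]

/-- Inclusion of the coefficients. -/
def i : ULift.{u} ℂˣ →* c.E where
  toFun a := ⟨a, 1⟩
  map_one' := rfl
  map_mul' a b := by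
    refine (E.ext (ULift.ext _ _ ?_) (one_mul _).symm)
    show a.down * b.down = a.down * b.down * c.f 1 1
    rw [c.oneL]; group

lemma i_injective : Function.Injective c.i := by
  intro a b h
  have := congrArg (fun p : c.E => p.a) h
  exact this

end NormSymmCocycle

open NormSymmCocycle in
lemma NormSymmCocycle.isCoboundary {A : Type u} [CommGroup A] (c : NormSymmCocycle A) :
    ∃ g : A → ℂˣ, ∀ x y : A, c.f x y = g x * g y * (g (x * y))⁻¹ := by
  let i' : AddCommGrpCat.of (Additive (ULift.{u} ℂˣ)) ⟶ AddCommGrpCat.of (Additive c.E) :=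
    AddCommGrpCat.ofHom (MonoidHom.toAdditive c.i)
  haveI : Mono i' := (AddCommGrpCat.mono_iff_injective _).mpr c.i_injective
  let r : AddCommGrpCat.of (Additive c.E) ⟶ AddCommGrpCat.of (Additive (ULift.{u} ℂˣ)) :=
    Injective.factorThru (𝟙 _) i'
  let r' : Additive c.E →+ Additive (ULift.{u} ℂˣ) := r.hom
  have hr : ∀ a : ULift.{u} ℂˣ, r' (Additive.ofMul (c.i a)) = Additive.ofMul a := by
    intro a
    have h0 := Injective.comp_factorThru (𝟙 (AddCommGrpCat.of (Additive (ULift.{u} ℂˣ)))) i'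
    exact congrArg (fun φ : AddCommGrpCat.of (Additive (ULift.{u} ℂˣ)) ⟶
      AddCommGrpCat.of (Additive (ULift.{u} ℂˣ)) => φ (Additive.ofMul a)) h0
  have hmul : ∀ p q : c.E, r' (Additive.ofMul (p * q)) =
      r' (Additive.ofMul p) + r' (Additive.ofMul q) := fun p q => r'.map_add _ _
  -- the section
  set s : A → c.E := fun x => ⟨⟨1⟩, x⟩ with hs
  have hsec : ∀ x y : A, s x * s y = c.i ⟨c.f x y⟩ * s (x * y) := by
    intro x y
    refine E.ext (ULift.ext _ _ ?_) (one_mul _).symm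
    show (1 : ℂˣ) * 1 * c.f x y = c.f x y * 1 * c.f 1 (x * y)
    rw [c.oneL]; group
  set g : A → ℂˣ := fun x => (Additive.toMul (r' (Additive.ofMul (s x)))).down with hg
  refine ⟨g, fun x y => ?_⟩
  have h2 : g x * g y = c.f x y * g (x * y) := by
    have h1 : r' (Additive.ofMul (s x)) + r' (Additive.ofMul (s y))
        = Additive.ofMul (⟨c.f x y⟩ : ULift.{u} ℂˣ) + r' (Additive.ofMul (s (x * y))) := by
      rw [← hmul, hsec, hmul, hr]
    have := congrArg (fun t : Additive (ULift.{u} ℂˣ) => (Additive.toMul t).down) h1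
    simpa [toMul_add] using this
  rw [h2, mul_inv_cancel_right]

/-- A 2-cocycle on a group `A` (written multiplicatively) with values in `ℂˣ`,
for the trivial action. -/
def IsTwoCocycle {A : Type*} [Group A] (f : A → A → ℂˣ) : Prop :=
  ∀ x y z : A, f x y * f (x * y) z = f x (y * z) * f y z

/-- A 2-coboundary: a 2-cocycle of the form `f x y = g x * g y * (g (x*y))⁻¹`. -/
def IsTwoCoboundary {A : Type*} [Group A] (f : A → A → ℂˣ) : Prop :=
  ∃ g : A → ℂˣ, ∀ x y : A, f x y = g x * g y * (g (x * y))⁻¹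

/-- Let `A` be a finite commutative group. A 2-cocycle `f : A × A → ℂˣ`
(with trivial action) is a 2-coboundary if and only if it is symmetric:
`f x y = f y x` for all `x, y ∈ A`. -/
theorem stmt_2 (A : Type*) [CommGroup A] [Finite A] (f : A → A → ℂˣ)
    (hf : IsTwoCocycle f) :
    IsTwoCoboundary f ↔ ∀ x y : A, f x y = f y x := by
  constructor
  · rintro ⟨g, hg⟩ x y
    rw [hg, hg, mul_comm y x, mul_comm (g y) (g x)]
  · intro hsymm
    have h1y : ∀ y, f 1 y = f 1 1 := by
      intro y
      have h := hf 1 1 y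
      simp only [one_mul] at h
      exact (mul_right_cancel h).symm
    have hx1 : ∀ x, f x 1 = f 1 1 := by
      intro x
      have h := hf x 1 1
      simp only [mul_one] at h
      exact mul_left_cancel h
    let c : NormSymmCocycle A :=
      { f := fun x y => f x y * (f 1 1)⁻¹
        cocycle := by
          intro x y z
          show f x y * (f 1 1)⁻¹ * (f (x * y) z * (f 1 1)⁻¹)
            = f x (y * z) * (f 1 1)⁻¹ * (f y z * (f 1 1)⁻¹)
          rw [mul_mul_mul_comm (f x y), mul_mul_mul_comm (f x (y * z)), hf x y z]
        symm := fun x y => by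
          show f x y * (f 1 1)⁻¹ = f y x * (f 1 1)⁻¹
          rw [hsymm x y]
        oneL := fun y => by
          show f 1 y * (f 1 1)⁻¹ = 1
          rw [h1y, mul_inv_cancel]
        oneR := fun x => by
          show f x 1 * (f 1 1)⁻¹ = 1
          rw [hx1, mul_inv_cancel] }
    obtain ⟨g, hgc⟩ := c.isCoboundary
    refine ⟨fun x => f 1 1 * g x, fun x y => ?_⟩
    have h := hgc x y
    simp only [c] at h
    rw [Units.ext_iff] at h ⊢
    push_cast at h ⊢
    field_simp at h ⊢
    linear_combination h
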